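/- Let s be a multiset of real numbers with card s = n, where n ≥ 1. Then the set of all multisets reachable from s by any finite sequence of Countdown steps (including the empty sequence, so s itself is counted) has cardinality at most ∑_{j=1}^{n} 3^{j−1} · n! · (n−1)! / ((n−j)! · (n+1−j)!). -/

import Mathlib

/-- A single Countdown step: remove two elements `x, y` (occupying distinct
positions) from the multiset and insert `o(x,y)` for an arithmetic
operation `o ∈ {+, -, *, /}`, division only by a nonzero number. -/
def CountdownStep (s t : Multiset ℝ) : Prop :=
  ∃ (u : Multiset ℝ) (x y r : ℝ), s = x ::ₘ y ::ₘ u ∧ t = r ::ₘ u ∧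
    (r = x + y ∨ r = x - y ∨ r = x * y ∨ (y ≠ 0 ∧ r = x / y))

/-- `CountdownReach s t` holds iff `t` is obtainable from `s` by a finite
(possibly empty) sequence of Countdown steps. -/
def CountdownReach : Multiset ℝ → Multiset ℝ → Prop :=
  Relation.ReflTransGen CountdownStep

private lemma getElem_mem_erase_aux (l : List ℝ) {i j : ℕ} (hi : i < l.length)
    (hj : j < l.length) (hij : i ≠ j) :
    l[j] ∈ (↑l : Multiset ℝ).erase l[i] := by
  rw [Multiset.coe_erase, Multiset.mem_coe]
  have hx : l[i] ∈ l := List.getElem_mem hi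
  have hi0 : l.idxOf l[i] < l.length := List.idxOf_lt_length_iff.2 hx
  have hx0 : l[l.idxOf l[i]]'hi0 = l[i] := List.getElem_idxOf hi0
  rw [List.erase_eq_eraseIdx_of_idxOf (l := l) (a := l[i]) rfl]
  set i0 := l.idxOf l[i] with hi0def
  obtain ⟨k, hk, hkne, hkval⟩ : ∃ k, ∃ hk : k < l.length, k ≠ i0 ∧ l[k] = l[j] := by
    by_cases hji : j = i0
    · subst hji; exact ⟨i, hi, by omega, hx0.symm⟩
    · exact ⟨j, hj, hji, rfl⟩
  have hlen : (l.eraseIdx i0).length = l.length - 1 := List.length_eraseIdx_of_lt hi0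
  rcases Nat.lt_or_ge k i0 with h | h
  · have : (l.eraseIdx i0)[k]'(by omega) = l[k] := List.getElem_eraseIdx_of_lt (l := l) (i := i0) (j := k) (by omega) h
    rw [← hkval, ← this]; exact List.getElem_mem _
  · have hk1 : k - 1 < (l.eraseIdx i0).length := by omega
    have : (l.eraseIdx i0)[k-1]'hk1 = l[(k-1)+1]'(by omega) :=
      List.getElem_eraseIdx_of_ge (l := l) (i := i0) (j := k-1) hk1 (by omega)
    have h2 : l[(k-1)+1]'(by omega) = l[k] := by congr 1; omega
    rw [← hkval, ← h2, ← this]; exact List.getElem_mem _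

/-- The value produced by operation index `k` on `(x, y)` at positions `(i, j)`. -/
noncomputable def opv : Fin 3 → ℕ → ℕ → ℝ → ℝ → ℝ
  | 0, _, _, x, y => x - y
  | 1, _, _, x, y => x / y
  | 2, i, j, x, y => if i ≤ j then x + y else x * y

/-- A finset containing all possible results of one Countdown step from `s`. -/
noncomputable def nextF (s : Multiset ℝ) : Finset (Multiset ℝ) :=
  ((Finset.range (Multiset.card s)).offDiag ×ˢ (Finset.univ : Finset (Fin 3))).image
    (fun p => opv p.2 p.1.1 p.1.2 (s.toList.getD p.1.1 0) (s.toList.getD p.1.2 0) ::ₘ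
        (s.erase (s.toList.getD p.1.1 0)).erase (s.toList.getD p.1.2 0))

lemma nextF_card_le (s : Multiset ℝ) (m : ℕ) (hm : Multiset.card s = m) :
    (nextF s).card ≤ 3 * m * (m - 1) := by
  subst hm
  set m := Multiset.card s
  calc (nextF s).card ≤ ((Finset.range m).offDiag ×ˢ (Finset.univ : Finset (Fin 3))).card :=
        Finset.card_image_le
    _ = (m * m - m) * 3 := by
        rw [Finset.card_product, Finset.offDiag_card, Finset.card_range]; rfl
    _ ≤ 3 * m * (m - 1) := by
        apply le_of_eq
        rw [← Nat.mul_sub_one m m, Nat.mul_comm _ 3, Nat.mul_assoc]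

lemma card_mem_nextF {s t : Multiset ℝ} (ht : t ∈ nextF s) :
    Multiset.card t + 1 = Multiset.card s ∧ 2 ≤ Multiset.card s := by
  classical
  simp only [nextF, Finset.mem_image, Finset.mem_product, Finset.mem_offDiag,
    Finset.mem_range] at ht
  obtain ⟨⟨⟨i, j⟩, k⟩, ⟨⟨hi, hj, hij⟩, -⟩, rfl⟩ := ht
  dsimp only at hi hj hij ⊢
  set l := s.toList with hl
  have hls : (↑l : Multiset ℝ) = s := s.coe_toList
  have hlen : l.length = Multiset.card s := s.length_toList
  have hi' : i < l.length := by omega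
  have hj' : j < l.length := by omega
  have hgi : l.getD i 0 = l[i] := List.getD_eq_getElem l 0 hi'
  have hgj : l.getD j 0 = l[j] := List.getD_eq_getElem l 0 hj'
  have hxm : l[i] ∈ s := by rw [← hls]; exact List.getElem_mem hi'
  have hym : l[j] ∈ s.erase l[i] := by rw [← hls]; exact getElem_mem_erase_aux l hi' hj' hij
  have h1 : Multiset.card (s.erase l[i]) = Multiset.card s - 1 := Multiset.card_erase_of_mem hxm
  have h2 : Multiset.card ((s.erase l[i]).erase l[j]) = Multiset.card (s.erase l[i]) - 1 :=
    Multiset.card_erase_of_mem hym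
  rw [hgi, hgj]
  simp only [Multiset.card_cons]
  constructor <;> omega

private lemma exists_indices {s u : Multiset ℝ} {x y : ℝ} (h : s = x ::ₘ y ::ₘ u) :
    ∃ i j : ℕ, i < Multiset.card s ∧ j < Multiset.card s ∧ i ≠ j ∧
      s.toList.getD i 0 = x ∧ s.toList.getD j 0 = y ∧ (s.erase x).erase y = u := by
  classical
  set l := s.toList with hldef
  have hls : (↑l : Multiset ℝ) = s := s.coe_toList
  have hlen : l.length = Multiset.card s := s.length_toList
  have hex : s.erase x = y ::ₘ u := by rw [h, Multiset.erase_cons_head]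
  have hexy : (s.erase x).erase y = u := by rw [hex, Multiset.erase_cons_head]
  have hxs : x ∈ s := by rw [h]; exact Multiset.mem_cons_self x _
  have hxl : x ∈ l := by rw [← Multiset.mem_coe, hls]; exact hxs
  have hi0 : l.idxOf x < l.length := List.idxOf_lt_length_iff.2 hxl
  have hx0 : l[l.idxOf x]'hi0 = x := List.getElem_idxOf hi0
  set i0 := l.idxOf x with hi0def
  have hye : y ∈ l.eraseIdx i0 := by
    rw [← List.erase_eq_eraseIdx_of_idxOf (l := l) (a := x) hi0def.symm, ← Multiset.mem_coe, ← Multiset.coe_erase, hls, hex]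
    exact Multiset.mem_cons_self y _
  obtain ⟨j', hj', hj'val⟩ := List.mem_iff_getElem.1 hye
  have hlen' : (l.eraseIdx i0).length = l.length - 1 := List.length_eraseIdx_of_lt hi0
  rcases Nat.lt_or_ge j' i0 with hcmp | hcmp
  · refine ⟨i0, j', by omega, by omega, by omega, ?_, ?_, hexy⟩
    · rw [List.getD_eq_getElem l 0 hi0]; exact hx0
    · rw [List.getD_eq_getElem l 0 (by omega : j' < l.length)]
      rw [← hj'val, List.getElem_eraseIdx_of_lt (l := l) (i := i0) (j := j') hj' hcmp]
  · refine ⟨i0, j' + 1, by omega, by omega, by omega, ?_, ?_, hexy⟩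
    · rw [List.getD_eq_getElem l 0 hi0]; exact hx0
    · rw [List.getD_eq_getElem l 0 (by omega : j' + 1 < l.length)]
      rw [← hj'val, List.getElem_eraseIdx_of_ge (l := l) (i := i0) (j := j') hj' hcmp]

lemma mem_nextF_of_step {s t : Multiset ℝ} (h : CountdownStep s t) : t ∈ nextF s := by
  classical
  obtain ⟨u, x, y, r, hs, ht, hr⟩ := h
  obtain ⟨i, j, hi, hj, hij, hgi, hgj, hu⟩ := exists_indices hs
  have mem : ∀ a b : ℕ, a < Multiset.card s → b < Multiset.card s → a ≠ b → ∀ k : Fin 3,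
      ((a, b), k) ∈ (Finset.range (Multiset.card s)).offDiag ×ˢ (Finset.univ : Finset (Fin 3)) := by
    intro a b ha hb hab k
    rw [Finset.mem_product]
    exact ⟨Finset.mem_offDiag.2 ⟨Finset.mem_range.2 ha, Finset.mem_range.2 hb, hab⟩,
      Finset.mem_univ _⟩
  have hcomm : (s.erase y).erase x = (s.erase x).erase y := Multiset.erase_comm s y x
  rcases hr with hr | hr | hr | ⟨-, hr⟩
  · -- addition
    by_cases hle : i ≤ j
    · refine Finset.mem_image.2 ⟨((i, j), 2), mem i j hi hj hij 2, ?_⟩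
      simp only [hgi, hgj, opv, hu]
      norm_num [hle, ht, hr]
    · refine Finset.mem_image.2 ⟨((j, i), 2), mem j i hj hi (Ne.symm hij) 2, ?_⟩
      simp only [hgi, hgj, opv, hcomm, hu]
      norm_num [le_of_not_ge hle, ht, hr, add_comm]
  · -- subtraction
    refine Finset.mem_image.2 ⟨((i, j), 0), mem i j hi hj hij 0, ?_⟩
    simp only [hgi, hgj, opv, hu]
    norm_num [ht, hr]
  · -- multiplication
    by_cases hle : i ≤ j
    · have : ¬ j ≤ i := by omega
      refine Finset.mem_image.2 ⟨((j, i), 2), mem j i hj hi (Ne.symm hij) 2, ?_⟩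
      simp only [hgi, hgj, opv, hcomm, hu]
      norm_num [this, ht, hr, mul_comm]
    · refine Finset.mem_image.2 ⟨((i, j), 2), mem i j hi hj hij 2, ?_⟩
      simp only [hgi, hgj, opv, hu]
      norm_num [hle, ht, hr]
  · -- division
    refine Finset.mem_image.2 ⟨((i, j), 1), mem i j hi hj hij 1, ?_⟩
    simp only [hgi, hgj, opv, hu]
    norm_num [ht, hr]

/-- The finset of multisets obtainable from `s` in exactly `k` steps (with junk). -/
noncomputable def RL (s : Multiset ℝ) : ℕ → Finset (Multiset ℝ)
  | 0 => {s}
  | k + 1 => (RL s k).biUnion nextF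

lemma RL_inv (s : Multiset ℝ) : ∀ k, ∀ t ∈ RL s k, Multiset.card t + k = Multiset.card s := by
  intro k
  induction k with
  | zero => intro t ht; rw [RL, Finset.mem_singleton] at ht; rw [ht]; omega
  | succ k ih =>
    intro t ht
    rw [RL, Finset.mem_biUnion] at ht
    obtain ⟨t', ht', htt⟩ := ht
    have h1 := card_mem_nextF htt
    have h2 := ih t' ht'
    omega

lemma RL_k_lt (s : Multiset ℝ) (n : ℕ) (hs : Multiset.card s = n) (hn : 1 ≤ n) :
    ∀ k t, t ∈ RL s k → k < n := by
  intro k t ht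
  cases k with
  | zero => omega
  | succ k =>
    rw [RL, Finset.mem_biUnion] at ht
    obtain ⟨t', ht', htt⟩ := ht
    have h1 := card_mem_nextF htt
    have h2 := RL_inv s (k+1) t (by rw [RL, Finset.mem_biUnion]; exact ⟨t', ht', htt⟩)
    omega

lemma RL_card_le (s : Multiset ℝ) (n : ℕ) (hs : Multiset.card s = n) :
    ∀ k, (RL s k).card ≤ 3 ^ k * n.descFactorial k * (n - 1).descFactorial k := by
  intro k
  induction k with
  | zero => simp [RL]
  | succ k ih =>
    have step : (RL s (k+1)).card ≤ (RL s k).card * (3 * (n - k) * (n - k - 1)) := by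
      rw [RL]
      calc ((RL s k).biUnion nextF).card ≤ ∑ t ∈ RL s k, (nextF t).card :=
            Finset.card_biUnion_le
        _ ≤ (RL s k).card • (3 * (n - k) * (n - k - 1)) := by
            apply Finset.sum_le_card_nsmul
            intro t ht
            have hinv := RL_inv s k t ht
            exact nextF_card_le t (n - k) (by omega)
        _ = (RL s k).card * (3 * (n - k) * (n - k - 1)) := by rw [smul_eq_mul]
    have hsub : n - k - 1 = n - 1 - k := by omega
    calc (RL s (k+1)).card ≤ (RL s k).card * (3 * (n - k) * (n - k - 1)) := step
      _ ≤ (3 ^ k * n.descFactorial k * (n-1).descFactorial k) * (3 * (n - k) * (n - k - 1)) :=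
          Nat.mul_le_mul_right _ ih
      _ = 3 ^ (k+1) * n.descFactorial (k+1) * (n-1).descFactorial (k+1) := by
          rw [hsub, Nat.descFactorial_succ, Nat.descFactorial_succ]
          ring

lemma reach_mem_RL {s t : Multiset ℝ} (h : CountdownReach s t) : ∃ k, t ∈ RL s k := by
  induction h with
  | refl => exact ⟨0, by rw [RL]; exact Finset.mem_singleton_self s⟩
  | tail hbc hstep ih =>
    obtain ⟨k, hk⟩ := ih
    exact ⟨k + 1, by rw [RL, Finset.mem_biUnion]; exact ⟨_, hk, mem_nextF_of_step hstep⟩⟩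

open Nat in
theorem countdown_reachable_ncard_le (s : Multiset ℝ) (n : ℕ)
    (hs : Multiset.card s = n) (hn : 1 ≤ n) :
    ({t : Multiset ℝ | CountdownReach s t}.ncard : ℚ) ≤
      ∑ j ∈ Finset.Icc 1 n,
        (3 : ℚ) ^ (j - 1) * (n ! : ℚ) * ((n - 1)! : ℚ) /
          (((n - j)! : ℚ) * ((n + 1 - j)! : ℚ)) := by
  classical
  set T : Finset (Multiset ℝ) := (Finset.range n).biUnion (RL s) with hT
  have hsub : {t : Multiset ℝ | CountdownReach s t} ⊆ ↑T := by
    intro t ht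
    obtain ⟨k, hk⟩ := reach_mem_RL ht
    exact Finset.mem_coe.2 (Finset.mem_biUnion.2
      ⟨k, Finset.mem_range.2 (RL_k_lt s n hs hn k t hk), hk⟩)
  have h1 : {t : Multiset ℝ | CountdownReach s t}.ncard ≤ T.card := by
    rw [← Set.ncard_coe_finset T]
    exact Set.ncard_le_ncard hsub T.finite_toSet
  have h2 : T.card ≤ ∑ k ∈ Finset.range n, (RL s k).card := Finset.card_biUnion_le
  have h3 : ∀ k ∈ Finset.range n,
      ((RL s k).card : ℚ) ≤ (3 : ℚ) ^ ((k+1) - 1) * (n ! : ℚ) * ((n - 1)! : ℚ) /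
        (((n - (k+1))! : ℚ) * ((n + 1 - (k+1))! : ℚ)) := by
    intro k hk
    rw [Finset.mem_range] at hk
    have e1 : (k + 1) - 1 = k := by omega
    have e2 : n - (k + 1) = n - 1 - k := by omega
    have e3 : n + 1 - (k + 1) = n - k := by omega
    rw [e1, e2, e3]
    have hb := RL_card_le s n hs k
    have hf1 : (n - k)! * n.descFactorial k = n ! :=
      Nat.factorial_mul_descFactorial (by omega)
    have hf2 : (n - 1 - k)! * (n-1).descFactorial k = (n-1)! :=
      Nat.factorial_mul_descFactorial (by omega)
    have key : ((3:ℚ) ^ k * (n.descFactorial k : ℚ) * ((n-1).descFactorial k : ℚ)) =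
        (3 : ℚ) ^ k * (n ! : ℚ) * ((n - 1)! : ℚ) / (((n - 1 - k)! : ℚ) * ((n - k)! : ℚ)) := by
      rw [← hf1, ← hf2]
      push_cast
      have p1 : (((n - k)! : ℕ) : ℚ) ≠ 0 := Nat.cast_ne_zero.2 (Nat.factorial_ne_zero _)
      have p2 : (((n - 1 - k)! : ℕ) : ℚ) ≠ 0 := Nat.cast_ne_zero.2 (Nat.factorial_ne_zero _)
      field_simp
    calc ((RL s k).card : ℚ) ≤ ((3 ^ k * n.descFactorial k * (n-1).descFactorial k : ℕ) : ℚ) := by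
          exact_mod_cast hb
      _ = (3:ℚ) ^ k * (n.descFactorial k : ℚ) * ((n-1).descFactorial k : ℚ) := by push_cast; ring
      _ = _ := key
  have hre : ∑ j ∈ Finset.Icc 1 n,
        (3 : ℚ) ^ (j - 1) * (n ! : ℚ) * ((n - 1)! : ℚ) /
          (((n - j)! : ℚ) * ((n + 1 - j)! : ℚ)) =
      ∑ k ∈ Finset.range n,
        (3 : ℚ) ^ ((k+1) - 1) * (n ! : ℚ) * ((n - 1)! : ℚ) /
          (((n - (k+1))! : ℚ) * ((n + 1 - (k+1))! : ℚ)) := by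
    rw [show Finset.Icc 1 n = Finset.map ⟨fun k => k + 1, add_left_injective 1⟩ (Finset.range n) by
      ext a
      simp only [Finset.mem_Icc, Finset.mem_map, Finset.mem_range, Function.Embedding.coeFn_mk]
      constructor
      · rintro ⟨h1, h2⟩; exact ⟨a - 1, by omega, by omega⟩
      · rintro ⟨b, hb, rfl⟩; omega]
    rw [Finset.sum_map]
    simp only [Function.Embedding.coeFn_mk]
  rw [hre]
  calc ({t : Multiset ℝ | CountdownReach s t}.ncard : ℚ) ≤ ((T.card : ℕ) : ℚ) := by
        exact_mod_cast h1
    _ ≤ ((∑ k ∈ Finset.range n, (RL s k).card : ℕ) : ℚ) := by exact_mod_cast h2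
    _ = ∑ k ∈ Finset.range n, ((RL s k).card : ℚ) := by push_cast; rfl
    _ ≤ _ := Finset.sum_le_sum h3
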